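/- Let A be a {0,1}-matrix indexed by positive integers containing no rectangle all four of whose corners are ones (i.e., no i≠k, j≠l with a_{ij}=a_{il}=a_{kj}=a_{kl}=1), with at most n+1 ones in every row and at most n+1 ones in every column. Fix a row k and suppose row k contains x ones among its first r-1 entries. Then the number of cells (k,l) that are galfs (cells (k,l) for which there exists a flag (i,j) with i≠k, j≠l and a_{ij}=a_{il}=a_{kj}=1, restricting attention to entries already placed) is at most x·n^2. -/
import Mathlib

lemma aux_finset (q : ℕ → Bool) (c : ℕ)
    (h : ∀ m, ((Finset.Icc 1 m).filter (fun j => q j = true)).card ≤ c) :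
    ∃ t : Finset ℕ, t.card ≤ c ∧ ∀ j, j ∈ t ↔ (1 ≤ j ∧ q j = true) := by
  classical
  set s : Set ℕ := {j | 1 ≤ j ∧ q j = true} with hs
  have hfin : s.Finite := by
    by_contra hinf
    rw [← Set.not_infinite, not_not] at hinf
    obtain ⟨t, hts, htc⟩ := hinf.exists_subset_card_eq (c + 1)
    have hsub : t ⊆ (Finset.Icc 1 (t.sup id)).filter (fun j => q j = true) := by
      intro j hj
      have hjs : j ∈ s := hts hj
      simp only [Finset.mem_filter, Finset.mem_Icc]
      exact ⟨⟨hjs.1, Finset.le_sup (f := id) hj⟩, hjs.2⟩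
    have := (Finset.card_le_card hsub).trans (h _)
    omega
  refine ⟨hfin.toFinset, ?_, fun j => by simp [hs]⟩
  have hsub : hfin.toFinset ⊆
      (Finset.Icc 1 (hfin.toFinset.sup id)).filter (fun j => q j = true) := by
    intro j hj
    have hjs : j ∈ s := hfin.mem_toFinset.mp hj
    simp only [Finset.mem_filter, Finset.mem_Icc]
    exact ⟨⟨hjs.1, Finset.le_sup (f := id) hj⟩, hjs.2⟩
  exact (Finset.card_le_card hsub).trans (h _)

/-- Lemma 3.1: in a rectangle-free `{0,1}`-matrix with row and column weights at most
`n+1`, where rows below `k` and the entries of row `k` from column `r` on are not yet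
placed, if row `k` contains `x` ones (among its first `r-1` entries), then the number
of galf cells `(k,l)` is at most `x * n^2`. -/
theorem stmt1 (n : ℕ) (a : ℕ → ℕ → Bool) (k r : ℕ) (hk : 1 ≤ k) (hr : 1 ≤ r)
    (hnorect : ¬ ∃ i j i' j', 1 ≤ i ∧ 1 ≤ j ∧ 1 ≤ i' ∧ 1 ≤ j' ∧ i ≠ i' ∧ j ≠ j' ∧
      a i j = true ∧ a i j' = true ∧ a i' j = true ∧ a i' j' = true)
    (hrow : ∀ i m, ((Finset.Icc 1 m).filter (fun j => a i j = true)).card ≤ n + 1)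
    (hcol : ∀ j m, ((Finset.Icc 1 m).filter (fun i => a i j = true)).card ≤ n + 1)
    (hbelow : ∀ i j, k < i → a i j = false)
    (hrowk : ∀ j, r ≤ j → a k j = false)
    (x : ℕ) (hx : x = ((Finset.Ico 1 r).filter (fun j => a k j = true)).card) :
    {l : ℕ | 1 ≤ l ∧ ∃ i j, 1 ≤ i ∧ 1 ≤ j ∧ i ≠ k ∧ j ≠ l ∧
      a i j = true ∧ a i l = true ∧ a k j = true}.Finite ∧
    {l : ℕ | 1 ≤ l ∧ ∃ i j, 1 ≤ i ∧ 1 ≤ j ∧ i ≠ k ∧ j ≠ l ∧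
      a i j = true ∧ a i l = true ∧ a k j = true}.ncard ≤ x * n ^ 2 := by
  classical
  choose tcol htcolc htcolm using fun j => aux_finset (fun i => a i j) (n + 1) (hcol j)
  choose trow htrowc htrowm using fun i => aux_finset (fun j => a i j) (n + 1) (hrow i)
  set Jset : Finset ℕ := (Finset.Ico 1 r).filter (fun j => a k j = true) with hJ
  set T : Finset ℕ :=
    Jset.biUnion (fun j => ((tcol j).erase k).biUnion (fun i => (trow i).erase j)) with hT
  set S : Set ℕ := {l : ℕ | 1 ≤ l ∧ ∃ i j, 1 ≤ i ∧ 1 ≤ j ∧ i ≠ k ∧ j ≠ l ∧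
      a i j = true ∧ a i l = true ∧ a k j = true} with hS
  have hsub : S ⊆ ↑T := by
    rintro l ⟨hl, i, j, hi, hj, hik, hjl, haij, hail, hakj⟩
    have hjr : j < r := by
      by_contra hjr
      rw [hrowk j (le_of_not_gt hjr)] at hakj
      exact Bool.false_ne_true hakj
    simp only [hT, Finset.mem_coe, Finset.mem_biUnion]
    refine ⟨j, ?_, i, ?_, ?_⟩
    · simp [hJ, Finset.mem_filter, Finset.mem_Ico, hj, hjr, hakj]
    · exact Finset.mem_erase.mpr ⟨hik, (htcolm j i).mpr ⟨hi, haij⟩⟩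
    · exact Finset.mem_erase.mpr ⟨fun h => hjl h.symm, (htrowm i l).mpr ⟨hl, hail⟩⟩
  have hcard : T.card ≤ x * n ^ 2 := by
    calc T.card ≤ ∑ j ∈ Jset, (((tcol j).erase k).biUnion (fun i => (trow i).erase j)).card :=
          Finset.card_biUnion_le
      _ ≤ ∑ _j ∈ Jset, n * n := by
          apply Finset.sum_le_sum
          intro j hj
          have hakj : a k j = true := by
            simp only [hJ, Finset.mem_filter] at hj; exact hj.2
          calc (((tcol j).erase k).biUnion (fun i => (trow i).erase j)).card
              ≤ ∑ i ∈ (tcol j).erase k, ((trow i).erase j).card := Finset.card_biUnion_le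
            _ ≤ ∑ _i ∈ (tcol j).erase k, n := by
                apply Finset.sum_le_sum
                intro i hi
                have haij : a i j = true := ((htcolm j i).mp (Finset.mem_of_mem_erase hi)).2
                have hj1 : 1 ≤ j := by
                  simp only [hJ, Finset.mem_filter, Finset.mem_Ico] at hj; exact hj.1.1
                have hjmem : j ∈ trow i := (htrowm i j).mpr ⟨hj1, haij⟩
                have := Finset.card_erase_of_mem hjmem
                have := htrowc i
                omega
            _ = ((tcol j).erase k).card * n := by rw [Finset.sum_const, smul_eq_mul]
            _ ≤ n * n := by
                have hkmem : k ∈ tcol j := (htcolm j k).mpr ⟨hk, hakj⟩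
                have h1 := Finset.card_erase_of_mem hkmem
                have h2 := htcolc j
                have : ((tcol j).erase k).card ≤ n := by omega
                exact Nat.mul_le_mul_right n this
      _ = Jset.card * (n * n) := by rw [Finset.sum_const, smul_eq_mul]
      _ = x * n ^ 2 := by rw [hx, hJ, pow_two]
  exact ⟨Set.Finite.subset T.finite_toSet hsub,
    le_trans (by rw [← Set.ncard_coe_finset]; exact Set.ncard_le_ncard hsub T.finite_toSet) hcard⟩
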